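/- Let A be an abelian group and let ⊗̂²A denote the quotient of A ⊗_ℤ A by the subgroup generated by all elements a⊗b + b⊗a. The projection A → A/2A induces a surjective homomorphism ⊗̂²A → ⊗̂²(A/2A) whose kernel is 2·(⊗̂²A); consequently there is an isomorphism (⊗̂²A) ⊗ ℤ/2 ≅ ⊗̂²(A/2A). -/

import Mathlib

open scoped TensorProduct

noncomputable section

/-- The subgroup of `A ⊗ A` generated by the elements `a ⊗ b + b ⊗ a`. -/
def symSub (A : Type*) [AddCommGroup A] : AddSubgroup (TensorProduct ℤ A A) :=
  AddSubgroup.closure {x | ∃ a b : A, x = a ⊗ₜ[ℤ] b + b ⊗ₜ[ℤ] a}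

/-- The reduced tensor square `⊗̂²A = (A ⊗ A)/⟨a ⊗ b + b ⊗ a⟩` of an abelian group `A`. -/
abbrev redSq (A : Type*) [AddCommGroup A] :=
  TensorProduct ℤ A A ⧸ symSub A

/-- The subgroup `2A` of `A`. -/
def twoSub (A : Type*) [AddCommGroup A] : AddSubgroup A :=
  AddSubgroup.closure {x | ∃ a : A, x = a + a}

section Aux

variable {A : Type*} [AddCommGroup A]

lemma mem_twoSub_self (a : A) : a + a ∈ twoSub A :=
  AddSubgroup.subset_closure ⟨a, rfl⟩

lemma quot_add_self (a : A ⧸ twoSub A) : a + a = 0 := by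
  obtain ⟨b, rfl⟩ := QuotientAddGroup.mk_surjective a
  rw [← QuotientAddGroup.mk_add]
  exact (QuotientAddGroup.eq_zero_iff _).2 (mem_twoSub_self b)

/-- The quotient map as a linear map. -/
def piL (A : Type*) [AddCommGroup A] : A →ₗ[ℤ] A ⧸ twoSub A :=
  (QuotientAddGroup.mk' (twoSub A)).toIntLinearMap

/-- The induced map on tensor squares composed with the quotient. -/
def gmap (A : Type*) [AddCommGroup A] :
    TensorProduct ℤ A A →+ redSq (A ⧸ twoSub A) :=
  (QuotientAddGroup.mk' (symSub (A ⧸ twoSub A))).comp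
    (TensorProduct.map (piL A) (piL A)).toAddMonoidHom

lemma gmap_tmul (a b : A) :
    gmap A (a ⊗ₜ[ℤ] b) =
      QuotientAddGroup.mk ((QuotientAddGroup.mk a : A ⧸ twoSub A) ⊗ₜ[ℤ]
        (QuotientAddGroup.mk b : A ⧸ twoSub A)) := rfl

lemma gmap_symSub : ∀ x ∈ symSub A, gmap A x = 0 := by
  intro x hx
  refine (AddSubgroup.closure_le (gmap A).ker).2 ?_ hx
  rintro _ ⟨a, b, rfl⟩
  simp only [SetLike.mem_coe, AddMonoidHom.mem_ker, map_add, gmap_tmul,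
    ← QuotientAddGroup.mk_add]
  exact (QuotientAddGroup.eq_zero_iff _).2 (AddSubgroup.subset_closure ⟨_, _, rfl⟩)

/-- The map `⊗̂²A → ⊗̂²(A/2A)`. -/
def phi (A : Type*) [AddCommGroup A] : redSq A →+ redSq (A ⧸ twoSub A) :=
  QuotientAddGroup.lift (symSub A) (gmap A) gmap_symSub

lemma phi_mk (a b : A) :
    phi A (QuotientAddGroup.mk (a ⊗ₜ[ℤ] b)) =
      QuotientAddGroup.mk ((QuotientAddGroup.mk a : A ⧸ twoSub A) ⊗ₜ[ℤ]
        (QuotientAddGroup.mk b : A ⧸ twoSub A)) := rfl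

lemma phi_surj : Function.Surjective (phi A) := by
  intro z
  obtain ⟨t, rfl⟩ := QuotientAddGroup.mk_surjective z
  obtain ⟨s, rfl⟩ := TensorProduct.map_surjective
    (g := piL A) (g' := piL A)
    QuotientAddGroup.mk_surjective QuotientAddGroup.mk_surjective t
  exact ⟨QuotientAddGroup.mk s, rfl⟩

lemma tensor_quot_add_self (t : TensorProduct ℤ (A ⧸ twoSub A) (A ⧸ twoSub A)) :
    t + t = 0 := by
  induction t using TensorProduct.induction_on with
  | zero => simp
  | tmul x y => rw [← TensorProduct.tmul_add, quot_add_self, TensorProduct.tmul_zero]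
  | add s t hs ht =>
      have : s + t + (s + t) = (s + s) + (t + t) := by abel
      rw [this, hs, ht, add_zero]

lemma redSq_quot_add_self (z : redSq (A ⧸ twoSub A)) : z + z = 0 := by
  obtain ⟨t, rfl⟩ := QuotientAddGroup.mk_surjective z
  rw [← QuotientAddGroup.mk_add, tensor_quot_add_self]
  rfl

/-- Abbreviation for `⊗̂²A / 2⊗̂²A`. -/
abbrev QA (A : Type*) [AddCommGroup A] := redSq A ⧸ twoSub (redSq A)

lemma QA_add_self (q : QA A) : q + q = 0 := by
  obtain ⟨x, rfl⟩ := QuotientAddGroup.mk_surjective q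
  rw [← QuotientAddGroup.mk_add]
  exact (QuotientAddGroup.eq_zero_iff _).2 (mem_twoSub_self x)

/-- `A →+ A →+ QA A`, `(a,b) ↦ [[a ⊗ b]]`. -/
def cmap (A : Type*) [AddCommGroup A] : A →+ A →+ QA A :=
  AddMonoidHom.mk'
    (fun a => AddMonoidHom.mk'
      (fun b => QuotientAddGroup.mk (QuotientAddGroup.mk (a ⊗ₜ[ℤ] b) : redSq A))
      (fun b₁ b₂ => by
        show QuotientAddGroup.mk (QuotientAddGroup.mk (a ⊗ₜ[ℤ] (b₁ + b₂)) : redSq A) = _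
        rw [TensorProduct.tmul_add]; rfl))
    (fun a₁ a₂ => by
      ext b
      show QuotientAddGroup.mk (QuotientAddGroup.mk ((a₁ + a₂) ⊗ₜ[ℤ] b) : redSq A) = _
      rw [TensorProduct.add_tmul]; rfl)

lemma cmap_apply (a b : A) :
    cmap A a b = QuotientAddGroup.mk (QuotientAddGroup.mk (a ⊗ₜ[ℤ] b) : redSq A) := rfl

lemma cmap_inner_ker (a : A) : ∀ b ∈ twoSub A, cmap A a b = 0 := by
  intro b hb
  refine (AddSubgroup.closure_le (cmap A a).ker).2 ?_ hb
  rintro _ ⟨y, rfl⟩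
  simp only [SetLike.mem_coe, AddMonoidHom.mem_ker, map_add, cmap_apply]
  exact QA_add_self _

/-- `A →+ (A/2A) →+ QA A`. -/
def dmap (A : Type*) [AddCommGroup A] : A →+ (A ⧸ twoSub A) →+ QA A :=
  AddMonoidHom.mk'
    (fun a => QuotientAddGroup.lift (twoSub A) (cmap A a) (cmap_inner_ker a))
    (fun a₁ a₂ => by
      refine AddMonoidHom.ext fun x => ?_
      obtain ⟨b, rfl⟩ := QuotientAddGroup.mk_surjective x
      show QuotientAddGroup.lift _ (cmap A (a₁ + a₂)) _ (QuotientAddGroup.mk b) = _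
      show cmap A (a₁ + a₂) b = _
      rw [map_add]
      rfl)

lemma dmap_apply (a b : A) :
    dmap A a (QuotientAddGroup.mk b)
      = QuotientAddGroup.mk (QuotientAddGroup.mk (a ⊗ₜ[ℤ] b) : redSq A) := rfl

lemma dmap_ker : ∀ a ∈ twoSub A, dmap A a = 0 := by
  intro a ha
  refine (AddSubgroup.closure_le (dmap A).ker).2 ?_ ha
  rintro _ ⟨y, rfl⟩
  simp only [SetLike.mem_coe, AddMonoidHom.mem_ker]
  refine AddMonoidHom.ext fun x => ?_
  obtain ⟨b, rfl⟩ := QuotientAddGroup.mk_surjective x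
  show QuotientAddGroup.mk (QuotientAddGroup.mk ((y + y) ⊗ₜ[ℤ] b) : redSq A) = 0
  rw [TensorProduct.add_tmul]
  exact QA_add_self (QuotientAddGroup.mk (QuotientAddGroup.mk (y ⊗ₜ[ℤ] b) : redSq A))

/-- `(A/2A) →+ (A/2A) →+ QA A`. -/
def emap (A : Type*) [AddCommGroup A] :
    (A ⧸ twoSub A) →+ (A ⧸ twoSub A) →+ QA A :=
  QuotientAddGroup.lift (twoSub A) (dmap A) dmap_ker

lemma emap_apply (a b : A) :
    emap A (QuotientAddGroup.mk a) (QuotientAddGroup.mk b)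
      = QuotientAddGroup.mk (QuotientAddGroup.mk (a ⊗ₜ[ℤ] b) : redSq A) := rfl

/-- Lift to the tensor product. -/
def psi0 (A : Type*) [AddCommGroup A] :
    TensorProduct ℤ (A ⧸ twoSub A) (A ⧸ twoSub A) →+ QA A :=
  TensorProduct.liftAddHom (emap A) (fun r m n => by
    rw [map_zsmul (emap A) r m, AddMonoidHom.smul_apply, ← map_zsmul (emap A m) r n])

lemma psi0_tmul (a b : A) :
    psi0 A ((QuotientAddGroup.mk a : A ⧸ twoSub A) ⊗ₜ[ℤ] (QuotientAddGroup.mk b))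
      = QuotientAddGroup.mk (QuotientAddGroup.mk (a ⊗ₜ[ℤ] b) : redSq A) := by
  rw [psi0, TensorProduct.liftAddHom_tmul, emap_apply]

lemma psi0_ker : ∀ t ∈ symSub (A ⧸ twoSub A), psi0 A t = 0 := by
  intro t ht
  refine (AddSubgroup.closure_le (psi0 A).ker).2 ?_ ht
  rintro _ ⟨x, y, rfl⟩
  obtain ⟨a, rfl⟩ := QuotientAddGroup.mk_surjective x
  obtain ⟨b, rfl⟩ := QuotientAddGroup.mk_surjective y
  simp only [SetLike.mem_coe, AddMonoidHom.mem_ker, map_add, psi0_tmul]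
  have hz : (QuotientAddGroup.mk (a ⊗ₜ[ℤ] b + b ⊗ₜ[ℤ] a) : redSq A) = 0 :=
    (QuotientAddGroup.eq_zero_iff _).2 (AddSubgroup.subset_closure ⟨a, b, rfl⟩)
  rw [← QuotientAddGroup.mk_add, ← QuotientAddGroup.mk_add, hz]
  rfl

/-- `⊗̂²(A/2A) →+ ⊗̂²A / 2⊗̂²A`. -/
def psi (A : Type*) [AddCommGroup A] : redSq (A ⧸ twoSub A) →+ QA A :=
  QuotientAddGroup.lift (symSub (A ⧸ twoSub A)) (psi0 A) psi0_ker

lemma psi_phi (x : redSq A) : psi A (phi A x) = QuotientAddGroup.mk x := by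
  obtain ⟨t, rfl⟩ := QuotientAddGroup.mk_surjective x
  induction t using TensorProduct.induction_on with
  | zero => simp
  | tmul a b =>
      rw [phi_mk]
      show psi0 A ((QuotientAddGroup.mk a : A ⧸ twoSub A) ⊗ₜ[ℤ] (QuotientAddGroup.mk b)) = _
      rw [psi0_tmul]
  | add s t hs ht =>
      rw [QuotientAddGroup.mk_add, map_add, map_add, hs, ht, ← QuotientAddGroup.mk_add,
        QuotientAddGroup.mk_add]

lemma phi_twoSub_ker : ∀ x ∈ twoSub (redSq A), phi A x = 0 := by
  intro x hx
  refine (AddSubgroup.closure_le (phi A).ker).2 ?_ hx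
  rintro _ ⟨y, rfl⟩
  simp only [SetLike.mem_coe, AddMonoidHom.mem_ker, map_add]
  exact redSq_quot_add_self _

/-- `phi` descends to `QA A`. -/
def phiBar (A : Type*) [AddCommGroup A] : QA A →+ redSq (A ⧸ twoSub A) :=
  QuotientAddGroup.lift (twoSub (redSq A)) (phi A) phi_twoSub_ker

lemma phiBar_psi (z : redSq (A ⧸ twoSub A)) : phiBar A (psi A z) = z := by
  obtain ⟨t, rfl⟩ := QuotientAddGroup.mk_surjective z
  induction t using TensorProduct.induction_on with
  | zero => simp
  | tmul x y =>
      obtain ⟨a, rfl⟩ := QuotientAddGroup.mk_surjective x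
      obtain ⟨b, rfl⟩ := QuotientAddGroup.mk_surjective y
      show phiBar A (psi0 A
        ((QuotientAddGroup.mk a : A ⧸ twoSub A) ⊗ₜ[ℤ] (QuotientAddGroup.mk b))) = _
      rw [psi0_tmul]
      rfl
  | add s t hs ht =>
      rw [QuotientAddGroup.mk_add, map_add, map_add, hs, ht]

lemma phi_ker_iff (x : redSq A) : phi A x = 0 ↔ ∃ y : redSq A, x = y + y := by
  constructor
  · intro h
    have hx : (QuotientAddGroup.mk x : QA A) = 0 := by
      rw [← psi_phi x, h, map_zero]
    have hmem : x ∈ twoSub (redSq A) := (QuotientAddGroup.eq_zero_iff _).1 hx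
    -- the set of doubles is already a subgroup
    let D : AddSubgroup (redSq A) :=
      { carrier := {x | ∃ y : redSq A, x = y + y}
        zero_mem' := ⟨0, by simp⟩
        add_mem' := by rintro _ _ ⟨y, rfl⟩ ⟨z, rfl⟩; exact ⟨y + z, by abel⟩
        neg_mem' := by rintro _ ⟨y, rfl⟩; exact ⟨-y, by abel⟩ }
    exact (AddSubgroup.closure_le D).2 (fun t ht => ht) hmem
  · rintro ⟨y, rfl⟩
    rw [map_add]
    exact redSq_quot_add_self _

/-- The doubling map in the second slot: `redSq A →+ ZMod 2 →+ QA A`. -/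
def umap0 (A : Type*) [AddCommGroup A] : redSq A →+ (ZMod 2 →+ QA A) :=
  AddMonoidHom.mk'
    (fun m => ZMod.lift 2 ⟨zmultiplesHom (QA A) (QuotientAddGroup.mk m),
      by
        show (2 : ℤ) • (QuotientAddGroup.mk m : QA A) = 0
        rw [two_zsmul]
        exact QA_add_self _⟩)
    (fun m₁ m₂ => by
      ext z
      obtain ⟨k, rfl⟩ := ZMod.intCast_surjective z
      simp only [AddMonoidHom.add_apply, ZMod.lift_coe]
      show k • (QuotientAddGroup.mk (m₁ + m₂) : QA A) = k • _ + k • _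
      rw [QuotientAddGroup.mk_add, smul_add])

lemma umap0_apply (m : redSq A) (k : ℤ) :
    umap0 A m ((k : ZMod 2)) = k • (QuotientAddGroup.mk m : QA A) := by
  show ZMod.lift 2 _ ((k : ZMod 2)) = _
  rw [ZMod.lift_coe]
  rfl

/-- `redSq A ⊗ ZMod 2 →+ QA A`. -/
def umap (A : Type*) [AddCommGroup A] :
    TensorProduct ℤ (redSq A) (ZMod 2) →+ QA A :=
  TensorProduct.liftAddHom (umap0 A) (fun r m n => by
    rw [map_zsmul (umap0 A) r m, AddMonoidHom.smul_apply, ← map_zsmul (umap0 A m) r n])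

/-- `QA A →+ redSq A ⊗ ZMod 2`. -/
def vmap (A : Type*) [AddCommGroup A] :
    QA A →+ TensorProduct ℤ (redSq A) (ZMod 2) :=
  QuotientAddGroup.lift (twoSub (redSq A))
    (AddMonoidHom.mk' (fun m => m ⊗ₜ[ℤ] (1 : ZMod 2))
      (fun m₁ m₂ => by
        show (m₁ + m₂) ⊗ₜ[ℤ] (1 : ZMod 2) = _
        rw [TensorProduct.add_tmul]))
    (by
      intro x hx
      refine (AddSubgroup.closure_le _).2 ?_ hx
      rintro _ ⟨y, rfl⟩
      simp only [SetLike.mem_coe, AddMonoidHom.mem_ker, AddMonoidHom.mk'_apply]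
      have h2 : (1 : ZMod 2) + 1 = 0 := by decide
      rw [TensorProduct.add_tmul, ← TensorProduct.tmul_add, h2, TensorProduct.tmul_zero])

lemma vmap_mk (m : redSq A) :
    vmap A (QuotientAddGroup.mk m) = m ⊗ₜ[ℤ] (1 : ZMod 2) := rfl

lemma umap_vmap (q : QA A) : umap A (vmap A q) = q := by
  obtain ⟨m, rfl⟩ := QuotientAddGroup.mk_surjective q
  rw [vmap_mk, umap]
  rw [TensorProduct.liftAddHom_tmul]
  have : (1 : ZMod 2) = ((1 : ℤ) : ZMod 2) := by decide
  rw [this, umap0_apply, one_smul]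

lemma vmap_umap (t : TensorProduct ℤ (redSq A) (ZMod 2)) : vmap A (umap A t) = t := by
  induction t using TensorProduct.induction_on with
  | zero => simp
  | tmul m z =>
      obtain ⟨k, rfl⟩ := ZMod.intCast_surjective z
      rw [umap, TensorProduct.liftAddHom_tmul, umap0_apply,
        ← QuotientAddGroup.mk_zsmul, vmap_mk, TensorProduct.smul_tmul, zsmul_one]
  | add s t hs ht => rw [map_add, map_add, hs, ht]

end Aux

/-- The projection `A → A/2A` induces a surjection `⊗̂²A → ⊗̂²(A/2A)` with kernel `2·⊗̂²A`;
consequently `(⊗̂²A) ⊗ ℤ/2 ≅ ⊗̂²(A/2A)`. -/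
theorem stmt_14 {A : Type*} [AddCommGroup A] :
    ∃ φ : redSq A →+ redSq (A ⧸ twoSub A),
      (∀ a b : A,
        φ (QuotientAddGroup.mk (a ⊗ₜ[ℤ] b)) =
          QuotientAddGroup.mk ((QuotientAddGroup.mk a : A ⧸ twoSub A) ⊗ₜ[ℤ]
            (QuotientAddGroup.mk b : A ⧸ twoSub A))) ∧
      Function.Surjective φ ∧
      (∀ x : redSq A, φ x = 0 ↔ ∃ y : redSq A, x = y + y) ∧
      Nonempty (TensorProduct ℤ (redSq A) (ZMod 2) ≃+ redSq (A ⧸ twoSub A)) := by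
  refine ⟨phi A, fun a b => phi_mk a b, phi_surj, phi_ker_iff, ⟨?_⟩⟩
  have e1 : TensorProduct ℤ (redSq A) (ZMod 2) ≃+ QA A :=
    AddMonoidHom.toAddEquiv (umap A) (vmap A)
      (AddMonoidHom.ext fun t => vmap_umap t) (AddMonoidHom.ext fun q => umap_vmap q)
  have e2 : QA A ≃+ redSq (A ⧸ twoSub A) :=
    AddMonoidHom.toAddEquiv (phiBar A) (psi A)
      (AddMonoidHom.ext fun q => by
        obtain ⟨x, rfl⟩ := QuotientAddGroup.mk_surjective q
        show psi A (phi A x) = _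
        rw [psi_phi]; rfl)
      (AddMonoidHom.ext fun z => phiBar_psi z)
  exact e1.trans e2

end
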